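/- (Section 5, verification of d_jk[lm] = −b_jkp a_lm^p) Let 𝔤 be a Lie algebra over a field of characteristic zero and Π : 𝔤 → 𝔤 a linear idempotent map (Π ∘ Π = Π) whose kernel is a Lie subalgebra of 𝔤, and let R : 𝔤 × 𝔤 → 𝔤 be a bilinear map with values in ker Π. Define a(ζ,τ) = −½Π[ζ,τ], b(ξ,η,ζ) = −½Π[[ξ,η],ζ] + ½Π[Π[ξ,η],ζ] − 2Π[R(ξ,η),ζ], and d(ξ,η,ζ,τ) = ½Π[τ,[[ξ,η],ζ]] − ½Π[τ,Π[[ξ,η],ζ]] − ½Π[τ,[Π[ξ,η],ζ]] + ½Π[τ,Π[Π[ξ,η],ζ]] − ½Π[Π[τ,[ξ,η]],ζ] + ½Π[Π[τ,Π[ξ,η]],ζ] + 2Π[τ,[R(ξ,η),ζ]] − 2Π[τ,Π[R(ξ,η),ζ]] − 2Π[Π[τ,R(ξ,η)],ζ]. Then for all ξ, η, ζ, τ ∈ 𝔤, ½(d(ξ,η,ζ,τ) − d(ξ,η,τ,ζ)) = −b(ξ, η, a(ζ,τ)). -/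
import Mathlib


/-- The curvature tensor of formula (3.2). -/
def bTensor {K : Type*} [Field K] {L : Type*} [LieRing L] [LieAlgebra K L]
    (P : L →ₗ[K] L) (R : L →ₗ[K] L →ₗ[K] L) (ξ η ζ : L) : L :=
  -(1/2 : K) • P ⁅⁅ξ, η⁆, ζ⁆ + (1/2 : K) • P ⁅P ⁅ξ, η⁆, ζ⁆ - (2 : K) • P ⁅R ξ η, ζ⁆

/-- The tensor `d = ∇²b` of formula (5.6). -/
def dTensor {K : Type*} [Field K] {L : Type*} [LieRing L] [LieAlgebra K L]
    (P : L →ₗ[K] L) (R : L →ₗ[K] L →ₗ[K] L) (ξ η ζ τ : L) : L :=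
  (1/2 : K) • P ⁅τ, ⁅⁅ξ, η⁆, ζ⁆⁆ - (1/2 : K) • P ⁅τ, P ⁅⁅ξ, η⁆, ζ⁆⁆
    - (1/2 : K) • P ⁅τ, ⁅P ⁅ξ, η⁆, ζ⁆⁆ + (1/2 : K) • P ⁅τ, P ⁅P ⁅ξ, η⁆, ζ⁆⁆
    - (1/2 : K) • P ⁅P ⁅τ, ⁅ξ, η⁆⁆, ζ⁆ + (1/2 : K) • P ⁅P ⁅τ, P ⁅ξ, η⁆⁆, ζ⁆
    + (2 : K) • P ⁅τ, ⁅R ξ η, ζ⁆⁆ - (2 : K) • P ⁅τ, P ⁅R ξ η, ζ⁆⁆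
    - (2 : K) • P ⁅P ⁅τ, R ξ η⁆, ζ⁆

/-- Auxiliary: `P⁅P⁅x,y⁆,z⁆ = P⁅z,P⁅y,x⁆⁆` by antisymmetry. -/
lemma dAlt_flip {K : Type*} [Field K] {L : Type*} [LieRing L] [LieAlgebra K L]
    (P : L →ₗ[K] L) (x y z : L) : P ⁅P ⁅x, y⁆, z⁆ = P ⁅z, P ⁅y, x⁆⁆ := by
  rw [← lie_skew y x, map_neg, lie_neg, ← lie_skew (P ⁅x, y⁆) z, map_neg]

/-- Auxiliary: a form of the Jacobi identity. -/
lemma dAlt_jac {L : Type*} [LieRing L] (x ζ τ : L) :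
    ⁅τ, ⁅x, ζ⁆⁆ - ⁅ζ, ⁅x, τ⁆⁆ + ⁅x, ⁅ζ, τ⁆⁆ = 0 := by
  have h := lie_jacobi x ζ τ
  rw [← lie_skew τ x, lie_neg] at h
  linear_combination (norm := module) h

/-- Section 5, verification of `d_jk[lm] = −b_jkp a_lm^p`: if `Π` is an
idempotent projection whose kernel is a subalgebra, and `R` takes values in `ker Π`,
then `½(d(ξ,η,ζ,τ) − d(ξ,η,τ,ζ)) = −b(ξ,η,a(ζ,τ))` where `a(ζ,τ) = −½Π[ζ,τ]`. -/
theorem d_alt_eq_neg_b_a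
    {K : Type*} [Field K] [CharZero K]
    {L : Type*} [LieRing L] [LieAlgebra K L]
    (P : L →ₗ[K] L) (R : L →ₗ[K] L →ₗ[K] L)
    (hidem : ∀ x : L, P (P x) = P x)
    (hker : ∀ x y : L, P x = 0 → P y = 0 → P ⁅x, y⁆ = 0)
    (hRker : ∀ x y : L, P (R x y) = 0)
    (ξ η ζ τ : L) :
    (1/2 : K) • (dTensor P R ξ η ζ τ - dTensor P R ξ η τ ζ)
      = -(bTensor P R ξ η (-(1/2 : K) • P ⁅ζ, τ⁆)) := by
  set A := ⁅ξ, η⁆ with hA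
  set r := R ξ η with hr0
  -- Jacobi identities, pushed through `P`
  have hj1 := congrArg P (dAlt_jac A ζ τ)
  have hj2 := congrArg P (dAlt_jac (P A) ζ τ)
  have hj3 := congrArg P (dAlt_jac r ζ τ)
  simp only [map_sub, map_add, map_zero] at hj1 hj2 hj3
  -- antisymmetry identities
  have ha1 := dAlt_flip P τ A ζ
  have ha2 := dAlt_flip P ζ A τ
  have ha3 := dAlt_flip P τ (P A) ζ
  have ha4 := dAlt_flip P ζ (P A) τ
  have ha5 := dAlt_flip P τ r ζ
  have ha6 := dAlt_flip P ζ r τ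
  -- kernel identities
  have hK : P ⁅A - P A, ⁅ζ, τ⁆ - P ⁅ζ, τ⁆⁆ = 0 :=
    hker _ _ (by simp [map_sub, hidem]) (by simp [map_sub, hidem])
  have hR : P ⁅r, ⁅ζ, τ⁆ - P ⁅ζ, τ⁆⁆ = 0 :=
    hker _ _ (hRker ξ η) (by simp [map_sub, hidem])
  simp only [lie_sub, sub_lie, map_sub, map_add] at hK hR
  unfold dTensor bTensor
  simp only [lie_smul, map_smul]
  linear_combination (norm := module)
    (1/4 : K) • hj1 - (1/4 : K) • hj2 + hj3
    - (1/4 : K) • ha1 + (1/4 : K) • ha2 + (1/4 : K) • ha3 - (1/4 : K) • ha4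
    - ha5 + ha6 - (1/4 : K) • hK - hR
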